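/- Let S ⊆ ℝ×[-1,1] be a model strip and let g : S → S be a homeomorphism which maps every leaf of the canonical foliation of S onto a leaf of the canonical foliation. Then g(x,y) = (λ(x,y), μ(y)) for all (x,y) ∈ S, where μ : [-1,1] → [-1,1] is a homeomorphism (restricting to a homeomorphism of (-1,1)), and λ : S → ℝ is a continuous function such that for each y ∈ (-1,1) the map x ↦ λ(x,y) is a homeomorphism of ℝ onto ℝ. -/

import Mathlib

/-- A *model strip* is a subset `S ⊆ ℝ × [-1,1]` containing `ℝ × (-1,1)` whose intersection with
`ℝ × {-1,1}` is a (possibly empty) union of open bounded intervals `(a,b) × {ε}` (`ε ∈ {-1,1}`)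
with pairwise disjoint closures. -/
def IsModelStrip (S : Set (ℝ × ℝ)) : Prop :=
  Set.univ ×ˢ Set.Ioo (-1 : ℝ) 1 ⊆ S ∧
  S ⊆ Set.univ ×ˢ Set.Icc (-1 : ℝ) 1 ∧
  ∃ I : Set (Set (ℝ × ℝ)),
    S ∩ (Set.univ ×ˢ ({-1, 1} : Set ℝ)) = ⋃₀ I ∧
    (∀ J ∈ I, ∃ a b ε : ℝ, a < b ∧ (ε = -1 ∨ ε = 1) ∧ J = Set.Ioo a b ×ˢ ({ε} : Set ℝ)) ∧
    (∀ J ∈ I, ∀ K ∈ I, J ≠ K → closure J ∩ closure K = ∅)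

/-- The leaves of the canonical foliation of a model strip `S`: the horizontal lines `ℝ × {y}`
for `y ∈ (-1,1)`, together with the connected components of `S ∩ (ℝ × {-1,1})`. -/
def IsLeaf (S : Set (ℝ × ℝ)) (L : Set (ℝ × ℝ)) : Prop :=
  (∃ y ∈ Set.Ioo (-1 : ℝ) 1, L = Set.univ ×ˢ ({y} : Set ℝ)) ∨
  (∃ p ∈ S ∩ (Set.univ ×ˢ ({-1, 1} : Set ℝ)),
    L = connectedComponentIn (S ∩ (Set.univ ×ˢ ({-1, 1} : Set ℝ))) p)

open Set Topology Filter

lemma aux_tr (S : Set (ℝ×ℝ)) (g : S ≃ₜ S) (L : Set (ℝ × ℝ)) :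
    IsPreconnected (S \ (Subtype.val ∘ ⇑g) '' (Subtype.val ⁻¹' L)) ↔ IsPreconnected (S \ L) := by
  have e0 : ∀ B : Set S, S \ Subtype.val '' B = Subtype.val '' Bᶜ := by
    intro B; ext z
    simp only [Set.mem_diff, Set.mem_image, Subtype.exists, exists_and_right, exists_eq_right,
      Set.mem_compl_iff]
    constructor
    · rintro ⟨hz, h2⟩; exact ⟨hz, fun hB => h2 ⟨hz, hB⟩⟩
    · rintro ⟨hz, h2⟩; exact ⟨hz, fun ⟨hz', hB⟩ => h2 hB⟩
  rw [Set.image_comp, e0, Topology.IsInducing.subtypeVal.isPreconnected_image]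
  have e1 : (⇑g '' (Subtype.val ⁻¹' L))ᶜ = ⇑g '' (Subtype.val ⁻¹' L)ᶜ :=
    (Equiv.image_compl g.toEquiv _).symm
  rw [e1, g.isPreconnected_image, ← Topology.IsInducing.subtypeVal.isPreconnected_image,
    ← Set.preimage_compl, Subtype.image_preimage_coe, ← Set.diff_eq]

lemma aux_p (T : Set (ℝ×ℝ)) (h1 : univ ×ˢ Ioo (-1:ℝ) 1 ⊆ T)
    (h2 : T ⊆ univ ×ˢ Icc (-1:ℝ) 1) : IsPreconnected T := by
  refine (isPreconnected_univ.prod isPreconnected_Ioo).subset_closure h1 ?_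
  rw [closure_prod_eq, closure_univ, closure_Ioo (by norm_num : (-1:ℝ) ≠ 1)]
  exact h2

lemma aux_np (S : Set (ℝ×ℝ)) (hS1 : univ ×ˢ Ioo (-1:ℝ) 1 ⊆ S) {c : ℝ}
    (hc : c ∈ Ioo (-1:ℝ) 1) : ¬ IsPreconnected (S \ univ ×ˢ ({c} : Set ℝ)) := by
  intro h
  have hU : IsOpen {p : ℝ × ℝ | p.2 < c} := isOpen_Iio.preimage continuous_snd
  have hV : IsOpen {p : ℝ × ℝ | c < p.2} := isOpen_Ioi.preimage continuous_snd
  have hcov : S \ univ ×ˢ ({c} : Set ℝ) ⊆ {p : ℝ × ℝ | p.2 < c} ∪ {p : ℝ × ℝ | c < p.2} := by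
    rintro p ⟨hpS, hpL⟩
    rcases lt_or_gt_of_ne (fun h : p.2 = c => hpL ⟨trivial, h⟩) with h' | h'
    · exact Or.inl h'
    · exact Or.inr h'
  have hne1 : ((S \ univ ×ˢ ({c} : Set ℝ)) ∩ {p : ℝ × ℝ | p.2 < c}).Nonempty := by
    refine ⟨((0:ℝ), (c-1)/2), ⟨hS1 ⟨trivial, ?_, ?_⟩, ?_⟩, ?_⟩
    · show (-1:ℝ) < (c-1)/2; linarith [hc.1]
    · show (c-1)/2 < 1; linarith [hc.2]
    · rintro ⟨-, h⟩; simp only [Set.mem_singleton_iff] at h; linarith [hc.1]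
    · show (c-1)/2 < c; linarith [hc.1]
  have hne2 : ((S \ univ ×ˢ ({c} : Set ℝ)) ∩ {p : ℝ × ℝ | c < p.2}).Nonempty := by
    refine ⟨((0:ℝ), (c+1)/2), ⟨hS1 ⟨trivial, ?_, ?_⟩, ?_⟩, ?_⟩
    · show (-1:ℝ) < (c+1)/2; linarith [hc.1]
    · show (c+1)/2 < 1; linarith [hc.2]
    · rintro ⟨-, h⟩; simp only [Set.mem_singleton_iff] at h; linarith [hc.2]
    · show c < (c+1)/2; linarith [hc.2]
  obtain ⟨p, -, hp1, hp2⟩ := h _ _ hU hV hcov hne1 hne2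
  simp only [Set.mem_setOf_eq] at hp1 hp2
  linarith

lemma aux_ext (f : ℝ → ℝ) (h1 : StrictMonoOn f (Icc (-1:ℝ) 1))
    (h2 : Set.SurjOn f (Icc (-1:ℝ) 1) (Icc (-1:ℝ) 1))
    (h3 : Set.MapsTo f (Icc (-1:ℝ) 1) (Icc (-1:ℝ) 1)) :
    ContinuousOn f (Icc (-1:ℝ) 1) ∧ ∃ ν : ℝ → ℝ, ContinuousOn ν (Icc (-1:ℝ) 1) ∧
      ∀ y ∈ Icc (-1:ℝ) 1, ν (f y) = y ∧ f (ν y) = y := by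
  classical
  set I : Set ℝ := Icc (-1:ℝ) 1 with hI
  set F : I → I := fun a => ⟨f a, h3 a.2⟩ with hF
  have hFmono : StrictMono F := fun a b hab => Subtype.coe_lt_coe.1 (h1 a.2 b.2 hab)
  have hFsurj : Function.Surjective F := by
    rintro ⟨b, hb⟩
    obtain ⟨a, ha, hfa⟩ := h2 hb
    exact ⟨⟨a, ha⟩, Subtype.ext hfa⟩
  set φ : I ≃o I := StrictMono.orderIsoOfSurjective F hFmono hFsurj with hφ
  have hφcoe : ∀ a : I, φ a = F a := fun a => by
    rw [hφ, StrictMono.coe_orderIsoOfSurjective]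
  have hcf : ContinuousOn f I := by
    rw [continuousOn_iff_continuous_restrict]
    have : I.domRestrict f = fun a : I => (φ a : ℝ) := by
      funext a; rw [hφcoe]; rfl
    rw [this]
    exact continuous_subtype_val.comp φ.toHomeomorph.continuous
  refine ⟨hcf, fun z => if h : z ∈ I then (φ.symm ⟨z, h⟩ : ℝ) else z, ?_, ?_⟩
  · rw [continuousOn_iff_continuous_restrict]
    have : I.domRestrict (fun z => if h : z ∈ I then (φ.symm ⟨z, h⟩ : ℝ) else z)
        = fun a : I => (φ.symm a : ℝ) := by
      funext a; simp only [Set.domRestrict_apply, dif_pos a.2]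
    rw [this]
    exact continuous_subtype_val.comp φ.toHomeomorph.symm.continuous
  · intro y hy
    constructor
    · have hfy : f y ∈ I := h3 hy
      show (if h : f y ∈ I then (φ.symm ⟨f y, h⟩ : ℝ) else f y) = y
      rw [dif_pos hfy]
      have : (⟨f y, hfy⟩ : I) = φ ⟨y, hy⟩ := by rw [hφcoe]
      rw [this, OrderIso.symm_apply_apply]
    · show f (if h : y ∈ I then (φ.symm ⟨y, h⟩ : ℝ) else y) = y
      rw [dif_pos hy]
      have := hφcoe (φ.symm ⟨y, hy⟩)
      have h4 : (φ (φ.symm ⟨y, hy⟩) : ℝ) = y := by rw [OrderIso.apply_symm_apply]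
      rw [this] at h4
      exact h4

lemma aux_monoOrAnti (f : ℝ → ℝ) (hc : ContinuousOn f (Ioo (-1:ℝ) 1))
    (hi : InjOn f (Ioo (-1:ℝ) 1)) :
    StrictMonoOn f (Ioo (-1:ℝ) 1) ∨ StrictAntiOn f (Ioo (-1:ℝ) 1) := by
  have hhalf : (-2⁻¹ : ℝ) ∈ Ioo (-1:ℝ) 1 := by norm_num
  have hhalf' : (2⁻¹ : ℝ) ∈ Ioo (-1:ℝ) 1 := by norm_num
  have key : ∀ x ∈ Ioo (-1:ℝ) 1, ∀ y ∈ Ioo (-1:ℝ) 1, x < y →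
      (f (-2⁻¹) < f 2⁻¹ → f x < f y) ∧ (f 2⁻¹ < f (-2⁻¹) → f y < f x) := by
    intro x hx y hy hxy
    set a := min x (-2⁻¹ : ℝ) with ha
    set b := max y (2⁻¹ : ℝ) with hb
    have haI : a ∈ Ioo (-1:ℝ) 1 :=
      ⟨lt_min hx.1 hhalf.1, lt_of_le_of_lt (min_le_left _ _) hx.2⟩
    have hbI : b ∈ Ioo (-1:ℝ) 1 :=
      ⟨lt_of_lt_of_le hy.1 (le_max_left _ _), max_lt hy.2 hhalf'.2⟩
    have hsub : Icc a b ⊆ Ioo (-1:ℝ) 1 :=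
      fun z hz => ⟨lt_of_lt_of_le haI.1 hz.1, lt_of_le_of_lt hz.2 hbI.2⟩
    have hab : a ≤ b := by
      calc a ≤ -2⁻¹ := min_le_right _ _
        _ ≤ 2⁻¹ := by norm_num
        _ ≤ b := le_max_right _ _
    have hxa : x ∈ Icc a b := ⟨min_le_left _ _, le_trans hxy.le (le_max_left _ _)⟩
    have hya : y ∈ Icc a b := ⟨le_trans (min_le_left _ _) hxy.le, le_max_left _ _⟩
    have hh1 : (-2⁻¹:ℝ) ∈ Icc a b := ⟨min_le_right _ _, by
      calc (-2⁻¹:ℝ) ≤ 2⁻¹ := by norm_num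
        _ ≤ b := le_max_right _ _⟩
    have hh2 : (2⁻¹:ℝ) ∈ Icc a b := ⟨by
      calc a ≤ -2⁻¹ := min_le_right _ _
        _ ≤ 2⁻¹ := by norm_num, le_max_right _ _⟩
    rcases ContinuousOn.strictMonoOn_of_injOn_Icc' hab (hc.mono hsub) (hi.mono hsub) with hm | hm
    · exact ⟨fun _ => hm hxa hya hxy,
        fun hlt => absurd (hm hh1 hh2 (by norm_num)) (not_lt.2 hlt.le)⟩
    · exact ⟨fun hlt => absurd (hm hh1 hh2 (by norm_num)) (not_lt.2 hlt.le),
        fun _ => hm hxa hya hxy⟩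
  rcases lt_or_ge (f (-2⁻¹)) (f 2⁻¹) with h | h
  · exact Or.inl (fun x hx y hy hxy => (key x hx y hy hxy).1 h)
  · have hne : f 2⁻¹ < f (-2⁻¹) := lt_of_le_of_ne h (fun he => by
      have := hi hhalf' hhalf he
      norm_num at this)
    exact Or.inr (fun x hx y hy hxy => (key x hx y hy hxy).2 hne)

/-- a homeomorphism `g` of a model strip `S` mapping every leaf of the canonical
foliation onto a leaf has the form `g (x, y) = (λ (x, y), μ y)` where `μ` is a homeomorphism of
`[-1,1]` restricting to a homeomorphism of `(-1,1)`, and `λ` is continuous with `x ↦ λ (x, y)` a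
homeomorphism of `ℝ` for every `y ∈ (-1,1)`. -/
theorem stmt_6 (S : Set (ℝ × ℝ)) (hS : IsModelStrip S) (g : S ≃ₜ S)
    (hleaf : ∀ L : Set (ℝ × ℝ), IsLeaf S L →
      IsLeaf S ((Subtype.val ∘ g) '' (Subtype.val ⁻¹' L))) :
    ∃ (lam : ℝ × ℝ → ℝ) (μ : ℝ → ℝ),
      (∀ p : S, ((g p : ℝ × ℝ)) = (lam (p : ℝ × ℝ), μ ((p : ℝ × ℝ).2))) ∧
      (Continuous fun p : S => lam (p : ℝ × ℝ)) ∧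
      ContinuousOn μ (Set.Icc (-1 : ℝ) 1) ∧
      Set.BijOn μ (Set.Icc (-1 : ℝ) 1) (Set.Icc (-1 : ℝ) 1) ∧
      Set.BijOn μ (Set.Ioo (-1 : ℝ) 1) (Set.Ioo (-1 : ℝ) 1) ∧
      (∃ ν : ℝ → ℝ, ContinuousOn ν (Set.Icc (-1 : ℝ) 1) ∧
        ∀ y ∈ Set.Icc (-1 : ℝ) 1, ν (μ y) = y ∧ μ (ν y) = y) ∧
      (∀ y ∈ Set.Ioo (-1 : ℝ) 1, ∃ e : ℝ ≃ₜ ℝ, ∀ x : ℝ, e x = lam (x, y)) := by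
  classical
  obtain ⟨hS1, hS2, -⟩ := hS
  have hmemS : ∀ (x : ℝ), ∀ y ∈ Ioo (-1:ℝ) 1, (x, y) ∈ S := fun x y hy => hS1 ⟨trivial, hy⟩
  -- the second-coordinate map on the interior
  set μ₀ : ℝ → ℝ := fun y =>
    if h : ((0:ℝ), y) ∈ S then ((g ⟨((0:ℝ), y), h⟩ : S) : ℝ × ℝ).2 else y with hμ₀
  have hμ₀val : ∀ (y : ℝ) (h : ((0:ℝ), y) ∈ S), μ₀ y = ((g ⟨((0:ℝ), y), h⟩ : S) : ℝ × ℝ).2 := by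
    intro y h
    show (if h : ((0:ℝ), y) ∈ S then ((g ⟨((0:ℝ), y), h⟩ : S) : ℝ × ℝ).2 else y) = _
    rw [dif_pos h]
  -- images of interior leaves
  have hMy : ∀ y ∈ Ioo (-1:ℝ) 1, μ₀ y ∈ Ioo (-1:ℝ) 1 ∧
      (Subtype.val ∘ ⇑g) '' (Subtype.val ⁻¹' (univ ×ˢ ({y} : Set ℝ)))
        = univ ×ˢ ({μ₀ y} : Set ℝ) := by
    intro y hy
    have hL : IsLeaf S (univ ×ˢ ({y} : Set ℝ)) := Or.inl ⟨y, hy, rfl⟩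
    have hM := hleaf _ hL
    have hnpc : ¬ IsPreconnected
        (S \ (Subtype.val ∘ ⇑g) '' (Subtype.val ⁻¹' (univ ×ˢ ({y} : Set ℝ)))) := by
      rw [aux_tr]
      exact aux_np S hS1 hy
    rcases hM with ⟨c, hc, hMc⟩ | ⟨p, hp, hMp⟩
    · have h0S : ((0:ℝ), y) ∈ S := hmemS 0 y hy
      have himg : (Subtype.val ∘ ⇑g) ⟨((0:ℝ), y), h0S⟩
          ∈ (Subtype.val ∘ ⇑g) '' (Subtype.val ⁻¹' (univ ×ˢ ({y} : Set ℝ))) :=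
        mem_image_of_mem _ (show ((0:ℝ), y) ∈ univ ×ˢ ({y} : Set ℝ) from ⟨trivial, rfl⟩)
      rw [hMc] at himg
      have hval : μ₀ y = c := by rw [hμ₀val y h0S]; exact himg.2
      rw [hval]
      exact ⟨hc, hMc⟩
    · exfalso
      apply hnpc
      apply aux_p
      · intro z hz
        refine ⟨hS1 hz, fun hzM => ?_⟩
        have hzB : z ∈ S ∩ (univ ×ˢ ({-1, 1} : Set ℝ)) := by
          rw [hMp] at hzM
          exact connectedComponentIn_subset _ _ hzM
        have h2 := hzB.2.2
        have h3 := hz.2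
        simp only [Set.mem_insert_iff, Set.mem_singleton_iff] at h2
        rcases h2 with h2 | h2 <;> rw [h2] at h3 <;>
          simp only [Set.mem_Ioo] at h3 <;> linarith [h3.1, h3.2]
      · exact fun z hz => ⟨trivial, (hS2 hz.1).2⟩
  -- g preserves the second coordinate on the interior
  have hsnd : ∀ (p : S), ((p : ℝ×ℝ)).2 ∈ Ioo (-1:ℝ) 1 →
      ((g p : S) : ℝ×ℝ).2 = μ₀ ((p : ℝ×ℝ).2) := by
    intro p hp
    have hmem : (Subtype.val ∘ ⇑g) p ∈ univ ×ˢ ({μ₀ ((p : ℝ×ℝ).2)} : Set ℝ) := by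
      rw [← (hMy _ hp).2]
      exact mem_image_of_mem _ (show (p : ℝ×ℝ) ∈ univ ×ˢ ({(p : ℝ×ℝ).2} : Set ℝ) from ⟨trivial, rfl⟩)
    exact hmem.2
  -- injectivity
  have hinj : InjOn μ₀ (Ioo (-1:ℝ) 1) := by
    intro y1 h1 y2 h2 he
    have h0S : ((0:ℝ), y1) ∈ S := hmemS 0 y1 h1
    have hq : ((g ⟨((0:ℝ), y1), h0S⟩ : S) : ℝ×ℝ) ∈ univ ×ˢ ({μ₀ y2} : Set ℝ) := by
      refine ⟨trivial, ?_⟩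
      show ((g ⟨((0:ℝ), y1), h0S⟩ : S) : ℝ×ℝ).2 = μ₀ y2
      rw [← he]
      exact hsnd ⟨((0:ℝ), y1), h0S⟩ h1
    rw [← (hMy y2 h2).2] at hq
    obtain ⟨r, hr, hval⟩ := hq
    have hrq : r = ⟨((0:ℝ), y1), h0S⟩ := g.injective (Subtype.val_injective hval)
    have h3 : ((r : ℝ×ℝ)).2 = y2 := hr.2
    rw [hrq] at h3
    exact h3
  -- surjectivity
  have hsurjIoo : SurjOn μ₀ (Ioo (-1:ℝ) 1) (Ioo (-1:ℝ) 1) := by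
    intro c hc
    have hcS : ((0:ℝ), c) ∈ S := hmemS 0 c hc
    set q := g.symm ⟨((0:ℝ), c), hcS⟩ with hqdef
    have hgq : g q = ⟨((0:ℝ), c), hcS⟩ := g.apply_symm_apply _
    have hq2 : ((q : ℝ×ℝ)).2 ∈ Icc (-1:ℝ) 1 := (hS2 q.2).2
    by_cases hint : ((q : ℝ×ℝ)).2 ∈ Ioo (-1:ℝ) 1
    · refine ⟨(q : ℝ×ℝ).2, hint, ?_⟩
      have h3 := hsnd q hint
      rw [hgq] at h3
      exact h3.symm
    · exfalso
      have hb : ((q : ℝ×ℝ)).2 = -1 ∨ ((q : ℝ×ℝ)).2 = 1 := by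
        simp only [Set.mem_Ioo, not_and_or, not_lt] at hint
        rcases hint with h | h
        · exact Or.inl (le_antisymm h hq2.1)
        · exact Or.inr (le_antisymm hq2.2 h)
      have hqB : (q : ℝ×ℝ) ∈ S ∩ (univ ×ˢ ({-1, 1} : Set ℝ)) := ⟨q.2, trivial, by
        simp only [Set.mem_insert_iff, Set.mem_singleton_iff]; exact hb⟩
      set L := connectedComponentIn (S ∩ (univ ×ˢ ({-1, 1} : Set ℝ))) (q : ℝ×ℝ) with hLdef
      have hL : IsLeaf S L := Or.inr ⟨_, hqB, rfl⟩
      have hM := hleaf _ hL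
      have hpc : IsPreconnected (S \ (Subtype.val ∘ ⇑g) '' (Subtype.val ⁻¹' L)) := by
        rw [aux_tr]
        apply aux_p
        · intro z hz
          refine ⟨hS1 hz, fun hzL => ?_⟩
          have h2 := (connectedComponentIn_subset _ _ hzL).2.2
          have h3 := hz.2
          simp only [Set.mem_insert_iff, Set.mem_singleton_iff] at h2
          rcases h2 with h2 | h2 <;> rw [h2] at h3 <;>
            simp only [Set.mem_Ioo] at h3 <;> linarith [h3.1, h3.2]
        · exact fun z hz => ⟨trivial, (hS2 hz.1).2⟩
      have h0M : ((0:ℝ), c) ∈ (Subtype.val ∘ ⇑g) '' (Subtype.val ⁻¹' L) := by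
        refine ⟨q, ?_, ?_⟩
        · show (q : ℝ×ℝ) ∈ L
          exact mem_connectedComponentIn hqB
        · show ((g q : S) : ℝ×ℝ) = ((0:ℝ), c)
          rw [hgq]
      rcases hM with ⟨c', hc', hMc⟩ | ⟨p, hp, hMp⟩
      · rw [hMc] at h0M hpc
        exact aux_np S hS1 hc' hpc
      · rw [hMp] at h0M
        have h2 := (connectedComponentIn_subset _ _ h0M).2.2
        simp only [Set.mem_insert_iff, Set.mem_singleton_iff] at h2
        rcases h2 with h2 | h2 <;> rw [h2] at hc <;>
          simp only [Set.mem_Ioo] at hc <;> linarith [hc.1, hc.2]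
  -- continuity on the interior
  have hcont : ContinuousOn μ₀ (Ioo (-1:ℝ) 1) := by
    rw [continuousOn_iff_continuous_restrict]
    have hj : Continuous (fun y : Ioo (-1:ℝ) 1 => (⟨((0:ℝ), (y:ℝ)), hmemS 0 y y.2⟩ : S)) :=
      Continuous.subtype_mk (continuous_const.prodMk continuous_subtype_val) _
    have he : (Ioo (-1:ℝ) 1).domRestrict μ₀ = fun y : Ioo (-1:ℝ) 1 =>
        ((g ⟨((0:ℝ), (y:ℝ)), hmemS 0 y y.2⟩ : S) : ℝ × ℝ).2 := by
      funext y
      simp only [domRestrict_apply]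
      rw [hμ₀val _ (hmemS 0 y y.2)]
    rw [he]
    exact continuous_snd.comp (continuous_subtype_val.comp (g.continuous.comp hj))
  -- extension package
  have hpkg : ∃ μ : ℝ → ℝ, (∀ y ∈ Ioo (-1:ℝ) 1, μ y = μ₀ y) ∧
      ContinuousOn μ (Icc (-1:ℝ) 1) ∧
      Set.BijOn μ (Icc (-1:ℝ) 1) (Icc (-1:ℝ) 1) ∧
      Set.BijOn μ (Ioo (-1:ℝ) 1) (Ioo (-1:ℝ) 1) ∧
      ∃ ν : ℝ → ℝ, ContinuousOn ν (Icc (-1:ℝ) 1) ∧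
        ∀ y ∈ Icc (-1:ℝ) 1, ν (μ y) = y ∧ μ (ν y) = y := by
    have hIooIcc : Ioo (-1:ℝ) 1 ⊆ Icc (-1:ℝ) 1 := Ioo_subset_Icc_self
    have hendNeg : (-1:ℝ) ∉ Ioo (-1:ℝ) 1 := by simp
    have hendPos : (1:ℝ) ∉ Ioo (-1:ℝ) 1 := by simp
    have hbdry : ∀ z ∈ Icc (-1:ℝ) 1, z ∉ Ioo (-1:ℝ) 1 → z = -1 ∨ z = 1 := by
      intro z hz hnz
      simp only [Set.mem_Ioo, not_and_or, not_lt] at hnz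
      rcases hnz with h | h
      · exact Or.inl (le_antisymm h hz.1)
      · exact Or.inr (le_antisymm hz.2 h)
    rcases aux_monoOrAnti μ₀ hcont hinj with hm | hm
    · -- increasing case
      set μ1 : ℝ → ℝ := fun y => if y ∈ Ioo (-1:ℝ) 1 then μ₀ y else y with hμ1
      have hag : ∀ y ∈ Ioo (-1:ℝ) 1, μ1 y = μ₀ y := fun y hy => if_pos hy
      have hout : ∀ y, y ∉ Ioo (-1:ℝ) 1 → μ1 y = y := fun y hy => if_neg hy
      have hmapsIoo : MapsTo μ1 (Ioo (-1:ℝ) 1) (Ioo (-1:ℝ) 1) := fun y hy => by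
        rw [hag y hy]; exact (hMy y hy).1
      have hsm : StrictMonoOn μ1 (Icc (-1:ℝ) 1) := by
        intro x hx y hy hxy
        by_cases hxI : x ∈ Ioo (-1:ℝ) 1 <;> by_cases hyI : y ∈ Ioo (-1:ℝ) 1
        · rw [hag x hxI, hag y hyI]; exact hm hxI hyI hxy
        · have hy1 : y = 1 := by
            rcases hbdry y hy hyI with h | h
            · exfalso; rw [h] at hxy; linarith [hxI.1]
            · exact h
          rw [hag x hxI, hout y hyI, hy1]
          exact (hMy x hxI).1.2
        · have hx1 : x = -1 := by
            rcases hbdry x hx hxI with h | h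
            · exact h
            · exfalso; rw [h] at hxy; linarith [hyI.2]
          rw [hout x hxI, hag y hyI, hx1]
          exact (hMy y hyI).1.1
        · have hx1 : x = -1 := by
            rcases hbdry x hx hxI with h | h
            · exact h
            · exfalso
              rcases hbdry y hy hyI with h' | h' <;> rw [h, h'] at hxy <;> linarith
          have hy1 : y = 1 := by
            rcases hbdry y hy hyI with h' | h'
            · exfalso; rw [hx1, h'] at hxy; linarith
            · exact h'
          rw [hout x hxI, hout y hyI, hx1, hy1]; norm_num
      have hbijIoo : Set.BijOn μ1 (Ioo (-1:ℝ) 1) (Ioo (-1:ℝ) 1) := by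
        refine ⟨hmapsIoo, fun a ha b hb he => hinj ha hb ?_, fun c hc => ?_⟩
        · rwa [hag a ha, hag b hb] at he
        · obtain ⟨y, hy, hμy⟩ := hsurjIoo hc
          exact ⟨y, hy, by rw [hag y hy]; exact hμy⟩
      have hmapsIcc : MapsTo μ1 (Icc (-1:ℝ) 1) (Icc (-1:ℝ) 1) := by
        intro y hy
        by_cases hyI : y ∈ Ioo (-1:ℝ) 1
        · exact hIooIcc (hmapsIoo hyI)
        · rw [hout y hyI]; exact hy
      have hsurjIcc : SurjOn μ1 (Icc (-1:ℝ) 1) (Icc (-1:ℝ) 1) := by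
        intro c hc
        by_cases hcI : c ∈ Ioo (-1:ℝ) 1
        · obtain ⟨y, hy, hμy⟩ := hbijIoo.2.2 hcI
          exact ⟨y, hIooIcc hy, hμy⟩
        · refine ⟨c, hc, hout c hcI⟩
      obtain ⟨hcont1, ν, hνc, hνid⟩ := aux_ext μ1 hsm hsurjIcc hmapsIcc
      exact ⟨μ1, hag, hcont1, ⟨hmapsIcc, hsm.injOn, hsurjIcc⟩, hbijIoo, ν, hνc, hνid⟩
    · -- decreasing case
      set μ1 : ℝ → ℝ := fun y => if y ∈ Ioo (-1:ℝ) 1 then μ₀ y else -y with hμ1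
      have hag : ∀ y ∈ Ioo (-1:ℝ) 1, μ1 y = μ₀ y := fun y hy => if_pos hy
      have hout : ∀ y, y ∉ Ioo (-1:ℝ) 1 → μ1 y = -y := fun y hy => if_neg hy
      have hmapsIoo : MapsTo μ1 (Ioo (-1:ℝ) 1) (Ioo (-1:ℝ) 1) := fun y hy => by
        rw [hag y hy]; exact (hMy y hy).1
      have hsa : StrictAntiOn μ1 (Icc (-1:ℝ) 1) := by
        intro x hx y hy hxy
        by_cases hxI : x ∈ Ioo (-1:ℝ) 1 <;> by_cases hyI : y ∈ Ioo (-1:ℝ) 1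
        · rw [hag x hxI, hag y hyI]; exact hm hxI hyI hxy
        · have hy1 : y = 1 := by
            rcases hbdry y hy hyI with h | h
            · exfalso; rw [h] at hxy; linarith [hxI.1]
            · exact h
          rw [hag x hxI, hout y hyI, hy1]
          have := (hMy x hxI).1.1; linarith
        · have hx1 : x = -1 := by
            rcases hbdry x hx hxI with h | h
            · exact h
            · exfalso; rw [h] at hxy; linarith [hyI.2]
          rw [hout x hxI, hag y hyI, hx1]
          have := (hMy y hyI).1.2; linarith
        · have hx1 : x = -1 := by
            rcases hbdry x hx hxI with h | h
            · exact h
            · exfalso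
              rcases hbdry y hy hyI with h' | h' <;> rw [h, h'] at hxy <;> linarith
          have hy1 : y = 1 := by
            rcases hbdry y hy hyI with h' | h'
            · exfalso; rw [hx1, h'] at hxy; linarith
            · exact h'
          rw [hout x hxI, hout y hyI, hx1, hy1]; norm_num
      have hbijIoo : Set.BijOn μ1 (Ioo (-1:ℝ) 1) (Ioo (-1:ℝ) 1) := by
        refine ⟨hmapsIoo, fun a ha b hb he => hinj ha hb ?_, fun c hc => ?_⟩
        · rwa [hag a ha, hag b hb] at he
        · obtain ⟨y, hy, hμy⟩ := hsurjIoo hc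
          exact ⟨y, hy, by rw [hag y hy]; exact hμy⟩
      have hmapsIcc : MapsTo μ1 (Icc (-1:ℝ) 1) (Icc (-1:ℝ) 1) := by
        intro y hy
        by_cases hyI : y ∈ Ioo (-1:ℝ) 1
        · exact hIooIcc (hmapsIoo hyI)
        · rw [hout y hyI]; exact ⟨by linarith [hy.2], by linarith [hy.1]⟩
      have hsurjIcc : SurjOn μ1 (Icc (-1:ℝ) 1) (Icc (-1:ℝ) 1) := by
        intro c hc
        by_cases hcI : c ∈ Ioo (-1:ℝ) 1
        · obtain ⟨y, hy, hμy⟩ := hbijIoo.2.2 hcI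
          exact ⟨y, hIooIcc hy, hμy⟩
        · refine ⟨-c, ⟨by linarith [hc.2], by linarith [hc.1]⟩, ?_⟩
          have hncI : -c ∉ Ioo (-1:ℝ) 1 := by
            intro h
            rcases hbdry c hc hcI with h' | h' <;> rw [h'] at h <;>
              simp only [Set.mem_Ioo] at h <;> linarith [h.1, h.2]
          rw [hout _ hncI]; ring
      -- apply aux_ext to the negation
      have hsmneg : StrictMonoOn (fun y => -(μ1 y)) (Icc (-1:ℝ) 1) :=
        fun a ha b hb hab => neg_lt_neg (hsa ha hb hab)
      have hmapsneg : MapsTo (fun y => -(μ1 y)) (Icc (-1:ℝ) 1) (Icc (-1:ℝ) 1) := by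
        intro y hy
        have := hmapsIcc hy
        simp only [Set.mem_Icc] at this ⊢
        constructor <;> linarith [this.1, this.2]
      have hsurjneg : SurjOn (fun y => -(μ1 y)) (Icc (-1:ℝ) 1) (Icc (-1:ℝ) 1) := by
        intro c hc
        obtain ⟨y, hy, hμy⟩ := hsurjIcc (show -c ∈ Icc (-1:ℝ) 1 from
          ⟨by linarith [hc.2], by linarith [hc.1]⟩)
        exact ⟨y, hy, by simp only; rw [hμy]; ring⟩
      obtain ⟨hcontneg, ν', hν'c, hν'id⟩ := aux_ext _ hsmneg hsurjneg hmapsneg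
      have hcont1 : ContinuousOn μ1 (Icc (-1:ℝ) 1) := by
        have : μ1 = fun y => -(-(μ1 y)) := by funext y; ring
        rw [this]
        exact hcontneg.neg
      refine ⟨μ1, hag, hcont1, ⟨hmapsIcc, hsa.injOn, hsurjIcc⟩, hbijIoo,
        fun z => ν' (-z), ?_, ?_⟩
      · apply hν'c.comp continuous_neg.continuousOn
        intro z hz
        simp only [Set.mem_Icc] at hz ⊢
        constructor <;> linarith [hz.1, hz.2]
      · intro y hy
        constructor
        · have := (hν'id y hy).1
          simpa using this
        · have hnyI : -y ∈ Icc (-1:ℝ) 1 := ⟨by linarith [hy.2], by linarith [hy.1]⟩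
          have h2 := (hν'id (-y) hnyI).2
          have h3 : μ1 (ν' (-y)) = -(-y) := by linarith [h2]
          rw [h3]; ring
  obtain ⟨μ, hag, hcontI, hbijIcc, hbijIoo, ν, hνc, hνid⟩ := hpkg
  refine ⟨fun p => if h : p ∈ S then ((g ⟨p, h⟩ : S) : ℝ×ℝ).1 else 0, μ, ?_, ?_,
    hcontI, hbijIcc, hbijIoo, ⟨ν, hνc, hνid⟩, ?_⟩
  · -- the product formula
    intro p
    have hfst : (if h : (p : ℝ×ℝ) ∈ S then ((g ⟨(p : ℝ×ℝ), h⟩ : S) : ℝ×ℝ).1 else 0)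
        = ((g p : S) : ℝ×ℝ).1 := by
      rw [dif_pos p.2, Subtype.coe_eta]
    refine Prod.ext hfst.symm ?_
    by_cases hI : ((p : ℝ×ℝ)).2 ∈ Ioo (-1:ℝ) 1
    · rw [hag _ hI]
      exact hsnd p hI
    · -- boundary point: limit argument
      have hpIcc : ((p : ℝ×ℝ)).2 ∈ Icc (-1:ℝ) 1 := (hS2 p.2).2
      set ε : ℝ := ((p : ℝ×ℝ)).2 with hε
      have hb : ε = -1 ∨ ε = 1 := by
        simp only [Set.mem_Ioo, not_and_or, not_lt] at hI
        rcases hI with h | h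
        · exact Or.inl (le_antisymm h hpIcc.1)
        · exact Or.inr (le_antisymm hpIcc.2 h)
      set y : ℕ → ℝ := fun n => ε * (1 - ((n:ℝ) + 2)⁻¹) with hydef
      have hfrac : ∀ n : ℕ, ((n:ℝ) + 2)⁻¹ ∈ Ioc (0:ℝ) 2⁻¹ := by
        intro n
        constructor
        · positivity
        · rw [inv_le_inv₀ (by positivity) (by norm_num)]
          have : (0:ℝ) ≤ (n:ℝ) := Nat.cast_nonneg n
          linarith
      have hyIoo : ∀ n, y n ∈ Ioo (-1:ℝ) 1 := by
        intro n
        have h1 := (hfrac n).1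
        have h2 := (hfrac n).2
        rcases hb with h | h <;> rw [hydef] <;> simp only [h] <;> constructor <;> nlinarith
      have hty : Tendsto y atTop (𝓝 ε) := by
        have h0 : Tendsto (fun n : ℕ => ((n:ℝ) + 2)⁻¹) atTop (𝓝 0) := by
          apply Filter.Tendsto.inv_tendsto_atTop
          exact tendsto_atTop_add_const_right _ 2 tendsto_natCast_atTop_atTop
        have := (tendsto_const_nhds (x := (1:ℝ)) (f := atTop (α := ℕ))).sub h0
        have h2 := (tendsto_const_nhds (x := ε) (f := atTop (α := ℕ))).mul this
        simpa using h2
      set pseq : ℕ → S := fun n => ⟨(((p : ℝ×ℝ)).1, y n), hS1 ⟨trivial, hyIoo n⟩⟩ with hpseq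
      have h2 : Tendsto pseq atTop (𝓝 p) := by
        rw [Topology.IsInducing.subtypeVal.tendsto_nhds_iff]
        have hval : (Subtype.val ∘ pseq) = fun n => (((p : ℝ×ℝ)).1, y n) := rfl
        rw [hval]
        have hplim : (p : ℝ×ℝ) = (((p : ℝ×ℝ)).1, ε) := by rw [hε]
        rw [← hplim] at *
        have := Filter.Tendsto.prodMk (tendsto_const_nhds (x := ((p : ℝ×ℝ)).1)
          (f := atTop (α := ℕ))) hty
        rw [show (p : ℝ×ℝ) = (((p : ℝ×ℝ)).1, ε) from by rw [hε]]
        exact this.congr (fun n => rfl) |>.mono_right (le_of_eq (by rw [nhds_prod_eq]))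
      have h3 : Tendsto (fun n => ((g (pseq n) : S) : ℝ×ℝ).2) atTop
          (𝓝 (((g p : S) : ℝ×ℝ).2)) := by
        have hF : Continuous (fun q : S => ((g q : S) : ℝ×ℝ).2) :=
          continuous_snd.comp (continuous_subtype_val.comp g.continuous)
        exact (hF.tendsto p).comp h2
      have h4 : ∀ n, ((g (pseq n) : S) : ℝ×ℝ).2 = μ (y n) := by
        intro n
        rw [hag _ (hyIoo n)]
        exact hsnd (pseq n) (hyIoo n)
      have h5 : Tendsto (fun n => μ (y n)) atTop (𝓝 (μ ε)) := by
        apply (hcontI ε hpIcc).tendsto.comp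
        rw [tendsto_nhdsWithin_iff]
        exact ⟨hty, Filter.Eventually.of_forall fun n => Ioo_subset_Icc_self (hyIoo n)⟩
      simp only [h4] at h3
      exact tendsto_nhds_unique h3 h5
  · -- continuity of lam
    have he : (fun p : S => if h : (p : ℝ×ℝ) ∈ S then ((g ⟨(p : ℝ×ℝ), h⟩ : S) : ℝ×ℝ).1 else 0)
        = fun p : S => ((g p : S) : ℝ×ℝ).1 := by
      funext p
      rw [dif_pos p.2, Subtype.coe_eta]
    rw [he]
    exact continuous_fst.comp (continuous_subtype_val.comp g.continuous)
  · -- horizontal homeomorphisms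
    intro y hy
    have hxyS : ∀ x : ℝ, (x, y) ∈ S := fun x => hmemS x y hy
    set fy : ℝ → ℝ := fun x => ((g ⟨(x, y), hxyS x⟩ : S) : ℝ×ℝ).1 with hfy
    have hlamfy : ∀ x : ℝ, (if h : ((x, y) : ℝ×ℝ) ∈ S
        then ((g ⟨(x, y), h⟩ : S) : ℝ×ℝ).1 else 0) = fy x := fun x => dif_pos (hxyS x)
    have hcfy : Continuous fy := by
      apply continuous_fst.comp (continuous_subtype_val.comp (g.continuous.comp _))
      exact Continuous.subtype_mk (continuous_id.prodMk continuous_const) _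
    have hinjfy : Function.Injective fy := by
      intro a b he
      have h2a := hsnd ⟨(a, y), hxyS a⟩ hy
      have h2b := hsnd ⟨(b, y), hxyS b⟩ hy
      have hval : ((g ⟨(a, y), hxyS a⟩ : S) : ℝ×ℝ) = ((g ⟨(b, y), hxyS b⟩ : S) : ℝ×ℝ) :=
        Prod.ext he (h2a.trans h2b.symm)
      have := g.injective (Subtype.val_injective hval)
      have h3 : ((a, y) : ℝ×ℝ) = (b, y) := congrArg Subtype.val this
      exact congrArg Prod.fst h3
    have hsurjfy : Function.Surjective fy := by
      intro a
      have hmem : ((a, μ₀ y) : ℝ×ℝ) ∈ univ ×ˢ ({μ₀ y} : Set ℝ) := ⟨trivial, rfl⟩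
      rw [← (hMy y hy).2] at hmem
      obtain ⟨r, hr, hval⟩ := hmem
      have hre : (((r : ℝ×ℝ)).1, y) = (r : ℝ×ℝ) := Prod.ext rfl (hr.2 : ((r:ℝ×ℝ)).2 = y).symm
      refine ⟨((r : ℝ×ℝ)).1, ?_⟩
      have hreq : (⟨(((r : ℝ×ℝ)).1, y), hxyS _⟩ : S) = r := Subtype.ext hre
      show ((g ⟨(((r : ℝ×ℝ)).1, y), hxyS _⟩ : S) : ℝ×ℝ).1 = a
      rw [hreq]
      exact congrArg Prod.fst hval
    rcases hcfy.strictMono_of_inj hinjfy with hsm | hsa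
    · refine ⟨(StrictMono.orderIsoOfSurjective fy hsm hsurjfy).toHomeomorph, fun x => ?_⟩
      show (StrictMono.orderIsoOfSurjective fy hsm hsurjfy) x = _
      rw [StrictMono.coe_orderIsoOfSurjective, ← hlamfy x]
    · set fy' : ℝ → ℝ := fun x => fy (-x) with hfy'
      have hsm' : StrictMono fy' := fun a b hab => hsa (neg_lt_neg hab)
      have hsurj' : Function.Surjective fy' := by
        intro a
        obtain ⟨x, hx⟩ := hsurjfy a
        exact ⟨-x, by rw [hfy']; simp only [neg_neg]; exact hx⟩
      refine ⟨(Homeomorph.neg ℝ).trans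
        (StrictMono.orderIsoOfSurjective fy' hsm' hsurj').toHomeomorph, fun x => ?_⟩
      show (StrictMono.orderIsoOfSurjective fy' hsm' hsurj') (-x) = _
      rw [StrictMono.coe_orderIsoOfSurjective]
      have hxx : fy' (-x) = fy x := by rw [hfy']; simp only [neg_neg]
      rw [hxx]
      exact (hlamfy x).symm
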